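/- Let q > 0, set c(q) = (cosh q − 1)/(cosh q + 1), and let 1 ≤ ξ ≤ 1/c(q). Define W_ξ : ℝ → ℝ by W_ξ(x) = max(x,0) + ξ·max(−x,0). Let α < 0 < β with |α| ≤ q and β ≤ q. If ε₁, ε₂ ∈ ℝ satisfy ε₂ − ε₁ = α + β and h(ε₁) + h(ε₂) = h(α) + h(β), then the stronger decay estimate W_ξ(ε₁) + W_ξ(ε₂) + ξ·(ξ − 1)·|ε₁| ≤ W_ξ(α) + W_ξ(β) holds. -/

import Mathlib

/-- The function `h` used to parametrize rarefaction (`ε ≥ 0`) and shock (`ε < 0`)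
branches of the wave curves of the isothermal p-system. -/
noncomputable def waveH (ε : ℝ) : ℝ := if 0 ≤ ε then ε else Real.sinh ε

/-- Weighted strength: weight `1` for rarefactions (positive part) and
weight `ξ` for shocks (negative part). -/
noncomputable def weightedStrength (ξ x : ℝ) : ℝ := max x 0 + ξ * max (-x) 0

lemma aux_WS_nonpos {ξ x : ℝ} (hx : x ≤ 0) : weightedStrength ξ x = ξ * (-x) := by
  unfold weightedStrength
  rw [max_eq_right hx, max_eq_left (neg_nonneg.2 hx)]
  ring

lemma aux_WS_nonneg {ξ x : ℝ} (hx : 0 ≤ x) : weightedStrength ξ x = x := by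
  unfold weightedStrength
  rw [max_eq_left hx, max_eq_right (neg_nonpos.2 hx)]
  ring



/-- `sinh a ≤ a cosh a` for `a ≥ 0`. -/
lemma aux_sinh_le_mul_cosh {a : ℝ} (ha : 0 ≤ a) : Real.sinh a ≤ a * Real.cosh a := by
  have key : MonotoneOn (fun t : ℝ => t * Real.cosh t - Real.sinh t) (Set.Ici 0) := by
    apply monotoneOn_of_hasDerivWithinAt_nonneg (f' := fun t => t * Real.sinh t) (convex_Ici 0)
    · fun_prop
    · intro t ht
      have h : HasDerivAt (fun t : ℝ => t * Real.cosh t - Real.sinh t)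
          (1 * Real.cosh t + t * Real.sinh t - Real.cosh t) t :=
        ((hasDerivAt_id t).mul (Real.hasDerivAt_cosh t)).sub (Real.hasDerivAt_sinh t)
      have h' : (1 * Real.cosh t + t * Real.sinh t - Real.cosh t) = t * Real.sinh t := by ring
      rw [h'] at h
      exact h.hasDerivWithinAt
    · intro t ht
      rw [interior_Ici] at ht
      have ht' : (0:ℝ) < t := ht
      exact mul_nonneg ht'.le (Real.sinh_nonneg_iff.2 ht'.le)
  have h0 := key (Set.self_mem_Ici) (Set.mem_Ici.2 ha) ha
  simp at h0
  linarith

/-- `sinh a + b < sinh (a + b)` for `b > 0`. -/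
lemma aux_sinh_add_lt {a b : ℝ} (hb : 0 < b) : Real.sinh a + b < Real.sinh (a + b) := by
  have e1 := Real.sinh_add (a + b/2) (b/2)
  have e2 := Real.sinh_sub (a + b/2) (b/2)
  rw [show a + b/2 + b/2 = a + b by ring] at e1
  rw [show a + b/2 - b/2 = a by ring] at e2
  nlinarith [Real.one_le_cosh (a + b/2), Real.self_lt_sinh_iff.2 (half_pos hb),
    Real.cosh_pos (a + b/2)]

/-- monotonicity in `a`: `sinh a - sinh (a-d) ≤ sinh q - sinh (q-d)` for `0 ≤ d ≤ a ≤ q`. -/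
lemma aux_sinh_diff_mono {q a d : ℝ} (hd : 0 ≤ d) (hda : d ≤ a) (haq : a ≤ q) :
    Real.sinh a - Real.sinh (a - d) ≤ Real.sinh q - Real.sinh (q - d) := by
  have e1 := Real.sinh_add (a - d/2) (d/2)
  have e2 := Real.sinh_sub (a - d/2) (d/2)
  rw [show a - d/2 + d/2 = a by ring] at e1
  rw [show a - d/2 - d/2 = a - d by ring] at e2
  have f1 := Real.sinh_add (q - d/2) (d/2)
  have f2 := Real.sinh_sub (q - d/2) (d/2)
  rw [show q - d/2 + d/2 = q by ring] at f1
  rw [show q - d/2 - d/2 = q - d by ring] at f2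
  have hcosh : Real.cosh (a - d/2) ≤ Real.cosh (q - d/2) := by
    rw [Real.cosh_le_cosh]
    rw [abs_of_nonneg (by linarith), abs_of_nonneg (by linarith)]
    linarith
  have hs : 0 ≤ Real.sinh (d/2) := Real.sinh_nonneg_iff.2 (by linarith)
  nlinarith [mul_le_mul_of_nonneg_right hcosh hs]



/-- Key interaction estimate inequality:
`sinh q - sinh (q - d) ≤ sinh (k d) + (k+1) d` with `k = (cosh q - 1)/2`, `0 ≤ d ≤ q`. -/
lemma aux_key_ineq {q d : ℝ} (hq : 0 < q) (hd0 : 0 ≤ d) (hdq : d ≤ q) :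
    Real.sinh q - Real.sinh (q - d) ≤
      Real.sinh ((Real.cosh q - 1)/2 * d) + ((Real.cosh q - 1)/2 + 1) * d := by
  set k : ℝ := (Real.cosh q - 1)/2 with hk
  have hk0 : 0 ≤ k := by
    have := Real.one_le_cosh q
    rw [hk]; linarith
  -- the derivative function
  set ψ : ℝ → ℝ := fun t => k * Real.cosh (k * t) + (k + 1) - Real.cosh (q - t) with hψ
  -- ψ is monotone on [0, q]
  have hψmono : MonotoneOn ψ (Set.Icc 0 q) := by
    apply monotoneOn_of_hasDerivWithinAt_nonneg
      (f' := fun t => k * (Real.sinh (k * t) * k) + Real.sinh (q - t)) (convex_Icc 0 q)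
    · fun_prop
    · intro t ht
      have h1 : HasDerivAt (fun s : ℝ => k * s) k t := by
        simpa using (hasDerivAt_id t).const_mul k
      have h2 : HasDerivAt (fun s : ℝ => Real.cosh (k * s)) (Real.sinh (k * t) * k) t :=
        (Real.hasDerivAt_cosh (k * t)).comp t h1
      have h3 : HasDerivAt (fun s : ℝ => q - s) (-1 : ℝ) t := by
        simpa using (hasDerivAt_id t).const_sub q
      have h4 : HasDerivAt (fun s : ℝ => Real.cosh (q - s)) (Real.sinh (q - t) * (-1)) t :=
        (Real.hasDerivAt_cosh (q - t)).comp t h3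
      have h5 : HasDerivAt ψ (k * (Real.sinh (k * t) * k) - Real.sinh (q - t) * (-1)) t :=
        ((h2.const_mul k).add_const (k + 1)).sub h4
      have h6 : k * (Real.sinh (k * t) * k) - Real.sinh (q - t) * (-1)
          = k * (Real.sinh (k * t) * k) + Real.sinh (q - t) := by ring
      rw [h6] at h5
      exact h5.hasDerivWithinAt
    · intro t ht
      rw [interior_Icc] at ht
      have hs1 : 0 ≤ Real.sinh (k * t) := Real.sinh_nonneg_iff.2 (mul_nonneg hk0 ht.1.le)
      have hs2 : 0 ≤ Real.sinh (q - t) := Real.sinh_nonneg_iff.2 (by linarith [ht.2])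
      nlinarith [mul_nonneg hk0 (mul_nonneg hs1 hk0)]
  -- ψ 0 = 0, hence ψ ≥ 0 on [0, q]
  have hψ0 : ψ 0 = 0 := by
    simp [hψ, hk, Real.cosh_zero]
    ring
  have hψnonneg : ∀ t ∈ Set.Icc (0:ℝ) q, 0 ≤ ψ t := by
    intro t ht
    have := hψmono (Set.mem_Icc.2 ⟨le_refl 0, hq.le⟩) ht ht.1
    rw [hψ0] at this
    exact this
  -- main function φ
  set φ : ℝ → ℝ := fun t => Real.sinh (k * t) + (k + 1) * t - Real.sinh q + Real.sinh (q - t)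
    with hφ
  have hφmono : MonotoneOn φ (Set.Icc 0 q) := by
    apply monotoneOn_of_hasDerivWithinAt_nonneg (f' := ψ) (convex_Icc 0 q)
    · fun_prop
    · intro t ht
      have h1 : HasDerivAt (fun s : ℝ => k * s) k t := by
        simpa using (hasDerivAt_id t).const_mul k
      have h2 : HasDerivAt (fun s : ℝ => Real.sinh (k * s)) (Real.cosh (k * t) * k) t :=
        (Real.hasDerivAt_sinh (k * t)).comp t h1
      have h3 : HasDerivAt (fun s : ℝ => q - s) (-1 : ℝ) t := by
        simpa using (hasDerivAt_id t).const_sub q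
      have h4 : HasDerivAt (fun s : ℝ => Real.sinh (q - s)) (Real.cosh (q - t) * (-1)) t :=
        (Real.hasDerivAt_sinh (q - t)).comp t h3
      have h5 : HasDerivAt (fun s : ℝ => (k + 1) * s) (k + 1) t := by
        simpa using (hasDerivAt_id t).const_mul (k + 1)
      have h6 : HasDerivAt φ (Real.cosh (k * t) * k + (k + 1) - 0 + Real.cosh (q - t) * (-1)) t := by
        exact ((h2.add h5).sub (hasDerivAt_const t (Real.sinh q))).add h4
      have h7 : Real.cosh (k * t) * k + (k + 1) - 0 + Real.cosh (q - t) * (-1) = ψ t := by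
        rw [hψ]; ring
      rw [h7] at h6
      exact h6.hasDerivWithinAt
    · intro t ht
      rw [interior_Icc] at ht
      exact hψnonneg t ⟨ht.1.le, ht.2.le⟩
  have h0 : φ 0 = 0 := by simp [hφ]
  have := hφmono (Set.mem_Icc.2 ⟨le_refl 0, hq.le⟩) (Set.mem_Icc.2 ⟨hd0, hdq⟩) hd0
  rw [h0] at this
  rw [hφ] at this
  simp only at this
  linarith

/-- stronger decay estimate for a shock–rarefaction interaction
(`α < 0 < β`): `W_ξ(ε₁) + W_ξ(ε₂) + ξ(ξ−1)|ε₁| ≤ W_ξ(α) + W_ξ(β)` for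
`1 ≤ ξ ≤ 1/c(q)`, `c(q) = (cosh q − 1)/(cosh q + 1)`. -/
theorem weighted_functional_decay_strong (q ξ α β ε₁ ε₂ : ℝ) (hq : 0 < q)
    (hξ1 : 1 ≤ ξ) (hξ2 : ξ ≤ 1 / ((Real.cosh q - 1) / (Real.cosh q + 1)))
    (hα : α < 0) (hβ : 0 < β) (hαq : |α| ≤ q) (hβq : β ≤ q)
    (h1 : ε₂ - ε₁ = α + β)
    (h2 : waveH ε₁ + waveH ε₂ = waveH α + waveH β) :
    weightedStrength ξ ε₁ + weightedStrength ξ ε₂ + ξ * (ξ - 1) * |ε₁| ≤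
      weightedStrength ξ α + weightedStrength ξ β := by
  have hC : 1 < Real.cosh q := Real.one_lt_cosh.2 hq.ne'
  set C : ℝ := Real.cosh q with hCdef
  -- rewrite the bound on ξ
  have hξC : ξ * (C - 1) ≤ C + 1 := by
    rw [one_div_div] at hξ2
    exact (le_div_iff₀ (by linarith)).1 hξ2
  -- unfold waveH for α, β
  simp only [waveH] at h2
  rw [if_neg (not_le.2 hα), if_pos hβ.le] at h2
  -- facts on α
  have haq : -α ≤ q := by rwa [abs_of_neg hα] at hαq
  -- ε₁ < 0
  have hε₁ : ε₁ < 0 := by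
    by_contra hcon
    push_neg at hcon
    rw [if_pos hcon] at h2
    by_cases hε₂ : 0 ≤ ε₂
    · rw [if_pos hε₂] at h2
      have : Real.sinh α < α := Real.sinh_lt_self_iff.2 hα
      linarith
    · push_neg at hε₂
      rw [if_neg (not_le.2 hε₂)] at h2
      have hlt : Real.sinh α + β < Real.sinh (α + β) := aux_sinh_add_lt hβ
      have hmono : Real.sinh (α + β) ≤ Real.sinh ε₂ := by
        rw [Real.sinh_le_sinh]; linarith
      linarith
  rw [if_neg (not_le.2 hε₁)] at h2
  rw [aux_WS_nonpos hε₁.le, aux_WS_nonpos hα.le, aux_WS_nonneg hβ.le, abs_of_neg hε₁]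
  by_cases hε₂ : 0 ≤ ε₂
  · -- Case A: reflected rarefaction side
    rw [if_pos hε₂] at h2
    rw [aux_WS_nonneg hε₂]
    -- relation: sinh ε₁ + ε₁ = sinh α - α
    have hrel : Real.sinh (-ε₁) + (-ε₁) = Real.sinh (-α) - (-α) := by
      rw [Real.sinh_neg, Real.sinh_neg]
      have : Real.sinh ε₁ + ε₁ = Real.sinh α - α := by linarith
      linarith
    have hx : 0 < -ε₁ := by linarith
    have ha : 0 < -α := by linarith
    have hsa : Real.sinh (-α) ≤ (-α) * C := by
      calc Real.sinh (-α) ≤ (-α) * Real.cosh (-α) := aux_sinh_le_mul_cosh ha.le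
        _ ≤ (-α) * C := by
            apply mul_le_mul_of_nonneg_left _ ha.le
            rw [hCdef, Real.cosh_le_cosh, abs_of_pos ha, abs_of_pos hq]
            exact haq
    have hxs : (-ε₁) ≤ Real.sinh (-ε₁) := Real.self_le_sinh_iff.2 hx.le
    have hx2 : 2 * (-ε₁) ≤ (-α) * (C - 1) := by nlinarith
    have hkey : (ξ - 1) * (-ε₁) ≤ -α := by
      nlinarith [mul_le_mul_of_nonneg_left hx2 (by linarith : (0:ℝ) ≤ ξ - 1),
        mul_le_mul_of_nonneg_left hξC ha.le]
    have hε₂eq : ε₂ = ε₁ + α + β := by linarith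
    nlinarith [mul_nonneg (by linarith : (0:ℝ) ≤ ξ + 1) (by linarith : 0 ≤ -α - (ξ-1)*(-ε₁))]
  · -- Case B: two shocks
    push_neg at hε₂
    rw [if_neg (not_le.2 hε₂)] at h2
    rw [aux_WS_nonpos hε₂.le]
    set x : ℝ := -ε₁ with hxdef
    set y : ℝ := -ε₂ with hydef
    set a : ℝ := -α with hadef
    have hx : 0 < x := by simp [hxdef]; linarith
    have hy : 0 < y := by simp [hydef]; linarith
    have ha : 0 < a := by simp [hadef]; linarith
    have hyeq : y = x + a - β := by simp [hxdef, hydef, hadef]; linarith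
    have hrel : Real.sinh x + Real.sinh y = Real.sinh a - β := by
      simp only [hxdef, hydef, hadef, Real.sinh_neg]
      linarith
    -- x < β
    have hxβ : x < β := by
      by_contra hcon
      push_neg at hcon
      have h1' : Real.sinh a ≤ Real.sinh y := by
        rw [Real.sinh_le_sinh]; linarith
      have h2' : 0 < Real.sinh x := Real.sinh_pos_iff.2 hx
      linarith
    set d : ℝ := β - x with hddef
    have hd0 : 0 < d := by simp [hddef]; linarith
    have hda : d < a := by linarith
    have hdq : d ≤ q := by linarith
    -- sinh x + x = sinh a - sinh (a - d) - d
    have hrel2 : Real.sinh x + x = Real.sinh a - Real.sinh (a - d) - d := by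
      have : y = a - d := by rw [hyeq, hddef]; ring
      rw [this] at hrel
      linarith
    have hstep3 := aux_sinh_diff_mono hd0.le hda.le (by linarith : a ≤ q)
    have hstep4 := aux_key_ineq hq hd0.le hdq
    -- sinh x + x ≤ sinh(k d) + k d, so x ≤ k d
    have hxkd : x ≤ (C - 1)/2 * d := by
      by_contra hcon
      push_neg at hcon
      have : Real.sinh ((C - 1)/2 * d) < Real.sinh x := Real.sinh_lt_sinh.2 hcon
      have hCC : Real.cosh q = C := rfl
      rw [hCC] at hstep4
      linarith
    -- conclude ξ x ≤ β
    have hξx : ξ * x ≤ β := by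
      nlinarith [mul_le_mul_of_nonneg_right hξC hx.le]
    have hfin : (ξ + 1) * (ξ * x) ≤ (ξ + 1) * β :=
      mul_le_mul_of_nonneg_left hξx (by linarith)
    rw [hyeq]
    linarith [hfin]
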